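/- Fix u ≥ 1 and sites a = (−u,−1), b = (u,1). Let (p_n) be any sequence of reals with 0 < p_n < 1 and p_n → 0, and let (x_n) be any sequence of reals satisfying |x_n+u|^{p_n} − |x_n−u|^{p_n} = 2^{p_n} for every n. Then x_n converges to u. In other words, as p tends to 0 from above, the intersection of the L_p bisector of a and b with the horizontal line y = −1 converges to the single point (u,−1). -/

import Mathlib

open Filter

lemma stmt19_key (u ε q y : ℝ) (hu : 1 ≤ u) (hq0 : 0 < q) (hq1 : q < 1)
    (hε0 : 0 < ε) (hε1 : ε ≤ 1)
    (h1 : (2:ℝ) ^ q * (u ^ q - 1) < ε) (h2 : 2 * u * q < ε)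
    (hx : |y + u| ^ q - |y - u| ^ q = (2:ℝ) ^ q) : |y - u| < ε := by
  have hu0 : (0:ℝ) < u := lt_of_lt_of_le one_pos hu
  have h2p : (0:ℝ) < 2 ^ q := Real.rpow_pos_of_pos two_pos q
  have hAB : |y - u| < |y + u| := by
    have hlt : |y - u| ^ q < |y + u| ^ q := by linarith
    exact (Real.rpow_lt_rpow_iff (abs_nonneg _) (abs_nonneg _) hq0).mp hlt
  have hx0 : 0 < y := by
    have h1' : |y - u| * |y - u| < |y + u| * |y + u| :=
      mul_self_lt_mul_self (abs_nonneg _) hAB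
    rw [abs_mul_abs_self, abs_mul_abs_self] at h1'
    nlinarith
  rcases le_or_gt y u with hle | hgt
  · -- case 0 < y ≤ u
    have habs1 : |y + u| = y + u := abs_of_pos (by linarith)
    have habs2 : |y - u| = u - y := by rw [abs_sub_comm]; exact abs_of_nonneg (by linarith)
    rw [habs1, habs2] at hx
    have hA : (y + u) ^ q ≤ (2 * u) ^ q :=
      Real.rpow_le_rpow (by linarith) (by linarith) hq0.le
    have h2u : ((2:ℝ) * u) ^ q = 2 ^ q * u ^ q := Real.mul_rpow (by norm_num) hu0.le
    have hsmall : (u - y) ^ q < ε := by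
      have : (2:ℝ) ^ q * (u ^ q - 1) = 2 ^ q * u ^ q - 2 ^ q := by ring
      linarith [hx, hA, h2u]
    have hεq : ε ≤ ε ^ q := by
      calc ε = ε ^ (1:ℝ) := (Real.rpow_one ε).symm
        _ ≤ ε ^ q := Real.rpow_le_rpow_of_exponent_ge hε0 hε1 hq1.le
    have : (u - y) ^ q < ε ^ q := lt_of_lt_of_le hsmall hεq
    have := (Real.rpow_lt_rpow_iff (by linarith) hε0.le hq0).mp this
    rw [habs2]; exact this
  · -- case y > u
    set B := y - u with hB
    have hB0 : 0 < B := by simp [hB]; linarith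
    have habs1 : |y + u| = B + 2 * u := by rw [abs_of_pos (by linarith)]; ring
    have habs2 : |y - u| = B := abs_of_pos hB0
    rw [habs1, habs2] at hx
    -- Bernoulli: (B + 2u)^q ≤ B^q * (1 + q * (2u/B))
    have hfact : B + 2 * u = B * (1 + 2 * u / B) := by field_simp
    have h2uB : (0:ℝ) ≤ 2 * u / B := by positivity
    have hbern : (1 + 2 * u / B) ^ q ≤ 1 + q * (2 * u / B) :=
      rpow_one_add_le_one_add_mul_self (by linarith) hq0.le hq1.le
    have hBq : (0:ℝ) < B ^ q := Real.rpow_pos_of_pos hB0 q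
    have hmul : (B + 2 * u) ^ q = B ^ q * (1 + 2 * u / B) ^ q := by
      rw [hfact, Real.mul_rpow hB0.le (by positivity)]
    have hstep : (2:ℝ) ^ q ≤ B ^ q * (q * (2 * u / B)) := by
      have : (B + 2 * u) ^ q ≤ B ^ q * (1 + q * (2 * u / B)) := by
        rw [hmul]; exact mul_le_mul_of_nonneg_left hbern hBq.le
      nlinarith
    have hone : (1:ℝ) ≤ 2 ^ q := Real.one_le_rpow one_le_two hq0.le
    -- B ≤ 2 u q * B^q
    have hBle : B ≤ 2 * u * q * B ^ q := by
      have h' : 1 ≤ B ^ q * (q * (2 * u / B)) := le_trans hone hstep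
      rw [div_eq_mul_inv] at h'
      have := mul_le_mul_of_nonneg_right h' hB0.le
      rw [one_mul] at this
      calc B ≤ B ^ q * (q * (2 * u * B⁻¹)) * B := this
        _ = 2 * u * q * B ^ q * (B⁻¹ * B) := by ring
        _ = 2 * u * q * B ^ q := by rw [inv_mul_cancel₀ hB0.ne', mul_one]
    by_contra hcon
    push_neg at hcon
    rw [habs2] at hcon
    -- ε ≤ B, derive contradiction
    have hB1p : B ^ (1 - q) ≤ 2 * u * q := by
      rw [Real.rpow_sub hB0, Real.rpow_one, div_le_iff₀ hBq]
      linarith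
    have hε1p : ε ≤ ε ^ (1 - q) := by
      calc ε = ε ^ (1:ℝ) := (Real.rpow_one ε).symm
        _ ≤ ε ^ (1 - q) := Real.rpow_le_rpow_of_exponent_ge hε0 hε1 (by linarith)
    have hεB : ε ^ (1 - q) ≤ B ^ (1 - q) :=
      Real.rpow_le_rpow hε0.le hcon (by linarith)
    linarith

/-- as `p → 0` from above, the points `(x,−1)` on the `L_p` bisector of
`(−u,−1)` and `(u,1)` (i.e. those with `|x+u|^p − |x−u|^p = 2^p`) converge to `(u,−1)`. -/
theorem stmt19 (u : ℝ) (hu : 1 ≤ u)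
    (p : ℕ → ℝ) (hp1 : ∀ n, 0 < p n) (hp2 : ∀ n, p n < 1)
    (hp : Tendsto p atTop (nhds 0))
    (x : ℕ → ℝ)
    (hx : ∀ n, |x n + u| ^ (p n) - |x n - u| ^ (p n) = (2:ℝ) ^ (p n)) :
    Tendsto x atTop (nhds u) := by
  have hu0 : (0:ℝ) < u := lt_of_lt_of_le one_pos hu
  rw [Metric.tendsto_atTop]
  intro ε hε
  set ε' := min ε 1 with hε'def
  have hε'0 : 0 < ε' := lt_min hε one_pos
  have hε'1 : ε' ≤ 1 := min_le_right _ _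
  have hε'ε : ε' ≤ ε := min_le_left _ _
  -- 2^{p n} * (u^{p n} - 1) → 0
  have ht2 : Tendsto (fun n => (2:ℝ) ^ (p n)) atTop (nhds 1) := by
    have hc : ContinuousAt (fun q : ℝ => (2:ℝ) ^ q) 0 :=
      (Real.continuousAt_const_rpow (by norm_num : (2:ℝ) ≠ 0))
    have := hc.tendsto.comp hp
    simpa [Real.rpow_zero, Function.comp_def] using this
  have htu : Tendsto (fun n => u ^ (p n)) atTop (nhds 1) := by
    have hc : ContinuousAt (fun q : ℝ => u ^ q) 0 :=
      (Real.continuousAt_const_rpow hu0.ne')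
    have := hc.tendsto.comp hp
    simpa [Real.rpow_zero, Function.comp_def] using this
  have h1 : Tendsto (fun n => (2:ℝ) ^ (p n) * (u ^ (p n) - 1)) atTop (nhds 0) := by
    have := ht2.mul (htu.sub (tendsto_const_nhds (x := (1:ℝ))))
    simpa using this
  have h2 : Tendsto (fun n => 2 * u * p n) atTop (nhds 0) := by
    have := hp.const_mul (2 * u)
    simpa using this
  have he1 : ∀ᶠ n in atTop, (2:ℝ) ^ (p n) * (u ^ (p n) - 1) < ε' :=
    (h1.eventually (eventually_lt_nhds hε'0)).mono (fun n h => by simpa using h)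
  have he2 : ∀ᶠ n in atTop, 2 * u * p n < ε' :=
    (h2.eventually (eventually_lt_nhds hε'0)).mono (fun n h => by simpa using h)
  rcases (he1.and he2).exists_forall_of_atTop with ⟨N, hN⟩
  refine ⟨N, fun n hn => ?_⟩
  rw [Real.dist_eq]
  exact lt_of_lt_of_le
    (stmt19_key u ε' (p n) (x n) hu (hp1 n) (hp2 n) hε'0 hε'1 (hN n hn).1 (hN n hn).2 (hx n))
    hε'ε
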